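/- Let x be a random vector in ℝᵖ with mean zero and finite covariance matrix Σ. Partition the coordinates into a block m and its complement −m, so that Σ has blocks Σ_{mm}, Σ_{m,−m}, Σ_{−m,m}, Σ_{−m,−m}, and assume Σ_{−m,−m} is invertible. Let β ∈ ℝᵖ with blocks β_m and β_{−m}, let σ_ε > 0, and set s² = β_mᵀ (Σ_{mm} − Σ_{m,−m} Σ_{−m,−m}⁻¹ Σ_{−m,m}) β_m, assuming s² > 0. Then 2·E_x[ KL( N(xᵀβ, σ_ε²) ‖ N(x_{−m}ᵀβ_{−m}, s² + σ_ε²) ) ] = log( (s² + σ_ε²)/σ_ε² ) + ( β_mᵀ Σ_{mm} β_m − s² )/( s² + σ_ε² ). (This is the paper's equation (4) from Example 1: in the multimodal linear model y = xᵀβ + ε with Var(ε) = σ_ε², the expected relative entropy H_m of the m-th modality equals log( (σ²_{m|−m} + σ_ε²)/σ_ε² ) + ( β_mᵀ Σ_m β_m − σ²_{m|−m} )/( σ²_{m|−m} + σ_ε² ), where σ²_{m|−m} = Var(x_mᵀβ_m | x_{−m}) = s² for Gaussian x and the reduced conditional law of y given x_{−m} is N(x_{−m}ᵀβ_{−m},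 σ²_{m|−m} + σ_ε²).) -/

import Mathlib

open MeasureTheory ProbabilityTheory Real Matrix Filter Topology
open scoped NNReal ENNReal

/-- The Kullback--Leibler divergence `KL(P ‖ Q) = ∫ log (dP/dQ) dP`. -/
lemma integrable_sq_mul_exp_neg_mul_sq {b : ℝ} (hb : 0 < b) :
    Integrable fun x : ℝ => x ^ 2 * rexp (-b * x ^ 2) := by
  have h := integrable_rpow_mul_exp_neg_mul_sq hb (by norm_num : (-1:ℝ) < 2)
  have : ∀ x : ℝ, x ^ (2:ℝ) = x ^ 2 := fun x => by
    rw [show (2:ℝ) = ((2:ℕ):ℝ) by norm_num, Real.rpow_natCast]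
  simpa [this] using h

lemma integral_sq_mul_exp_neg_mul_sq {b : ℝ} (hb : 0 < b) :
    ∫ x : ℝ, x ^ 2 * rexp (-b * x ^ 2) = Real.sqrt (π / b) / (2 * b) := by
  have hderiv : ∀ x : ℝ, HasDerivAt (fun x : ℝ => x * rexp (-b * x ^ 2))
      (rexp (-b * x ^ 2) - 2 * b * (x ^ 2 * rexp (-b * x ^ 2))) x := by
    intro x
    have h1 : HasDerivAt (fun x : ℝ => -b * x ^ 2) (-b * (2 * x ^ 1)) x := by
      simpa using (hasDerivAt_pow 2 x).const_mul (-b)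
    have := (hasDerivAt_id' x).mul h1.exp
    refine this.congr_deriv ?_
    simp
    ring
  have htop : Tendsto (fun x : ℝ => x * rexp (-b * x ^ 2)) atTop (𝓝 0) := by
    have h := rpow_mul_exp_neg_mul_sq_isLittleO_exp_neg hb 1
    simp only [Real.rpow_one] at h
    refine h.trans_tendsto ?_
    have : Tendsto (fun x : ℝ => -(1/2) * x) atTop atBot :=
      (tendsto_const_mul_atBot_of_neg (by norm_num)).mpr tendsto_id
    exact Real.tendsto_exp_atBot.comp this
  have hbot : Tendsto (fun x : ℝ => x * rexp (-b * x ^ 2)) atBot (𝓝 0) := by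
    have h := (htop.comp tendsto_neg_atBot_atTop).neg
    simp only [Function.comp_def, neg_neg, neg_mul, neg_zero, neg_sq] at h
    convert h using 2 with x
    ring_nf
  have hint2 := integrable_sq_mul_exp_neg_mul_sq hb
  have hint0 := integrable_exp_neg_mul_sq hb
  have h := integral_of_hasDerivAt_of_tendsto hderiv
    (hint0.sub (hint2.const_mul (2*b))) hbot htop
  rw [integral_sub hint0 (hint2.const_mul _), integral_const_mul, integral_gaussian] at h
  have hb' : (2*b) ≠ 0 := by positivity
  field_simp at h ⊢
  linarith

lemma gaussianPDFReal_zero_eq {v : ℝ≥0} (x : ℝ) :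
    gaussianPDFReal 0 v x = (Real.sqrt (2 * π * v))⁻¹ * rexp (-(2 * (v:ℝ))⁻¹ * x ^ 2) := by
  rw [gaussianPDFReal]
  congr 1
  rw [sub_zero, neg_div, div_eq_inv_mul, neg_mul]

lemma integrable_pdf0_mul_sq (v : ℝ≥0) (hv : v ≠ 0) :
    Integrable fun x : ℝ => gaussianPDFReal 0 v x * x ^ 2 := by
  have hb : 0 < (2 * (v:ℝ))⁻¹ := by positivity
  have h := (integrable_sq_mul_exp_neg_mul_sq hb).const_mul (Real.sqrt (2 * π * v))⁻¹
  refine h.congr (ae_of_all _ fun x => ?_)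
  simp only [gaussianPDFReal_zero_eq]
  ring

lemma integrable_pdf0_mul_id (v : ℝ≥0) (hv : v ≠ 0) :
    Integrable fun x : ℝ => gaussianPDFReal 0 v x * x := by
  have hb : 0 < (2 * (v:ℝ))⁻¹ := by positivity
  have h := (integrable_mul_exp_neg_mul_sq hb).const_mul (Real.sqrt (2 * π * v))⁻¹
  refine h.congr (ae_of_all _ fun x => ?_)
  simp only [gaussianPDFReal_zero_eq]
  ring

lemma integral_id_mul_exp_neg_mul_sq {b : ℝ} (hb : 0 < b) :
    ∫ x : ℝ, x * rexp (-b * x ^ 2) = 0 := by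
  have hderiv : ∀ x : ℝ, HasDerivAt (fun x : ℝ => -(2*b)⁻¹ * rexp (-b * x ^ 2))
      (x * rexp (-b * x ^ 2)) x := by
    intro x
    have h1 : HasDerivAt (fun x : ℝ => -b * x ^ 2) (-b * (2 * x ^ 1)) x := by
      simpa using (hasDerivAt_pow 2 x).const_mul (-b)
    have := h1.exp.const_mul (-(2*b)⁻¹)
    refine this.congr_deriv ?_
    have : (2*b) ≠ 0 := by positivity
    field_simp
  have key : Tendsto (fun x : ℝ => -b * x ^ 2) atTop atBot ∧
      Tendsto (fun x : ℝ => -b * x ^ 2) atBot atBot := by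
    constructor
    · exact (tendsto_const_mul_atBot_of_neg (by linarith)).mpr (tendsto_pow_atTop two_ne_zero)
    · refine (tendsto_const_mul_atBot_of_neg (by linarith)).mpr ?_
      have habs : Tendsto (fun x : ℝ => |x| ^ 2) atBot atTop :=
        (tendsto_pow_atTop two_ne_zero).comp tendsto_abs_atBot_atTop
      exact habs.congr fun x => sq_abs x
  have htop : Tendsto (fun x : ℝ => -(2*b)⁻¹ * rexp (-b * x ^ 2)) atTop (𝓝 0) := by
    simpa using (Real.tendsto_exp_atBot.comp key.1).const_mul (-(2*b)⁻¹)
  have hbot : Tendsto (fun x : ℝ => -(2*b)⁻¹ * rexp (-b * x ^ 2)) atBot (𝓝 0) := by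
    simpa using (Real.tendsto_exp_atBot.comp key.2).const_mul (-(2*b)⁻¹)
  have h := integral_of_hasDerivAt_of_tendsto hderiv (integrable_mul_exp_neg_mul_sq hb) hbot htop
  simpa using h

lemma integral_pdf0_mul_id (v : ℝ≥0) (hv : v ≠ 0) :
    ∫ x : ℝ, gaussianPDFReal 0 v x * x = 0 := by
  have hb : 0 < (2 * (v:ℝ))⁻¹ := by positivity
  have heq : (fun x : ℝ => gaussianPDFReal 0 v x * x)
      = fun x : ℝ => (Real.sqrt (2 * π * v))⁻¹ * (x * rexp (-(2 * (v:ℝ))⁻¹ * x ^ 2)) :=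
    funext fun x => by rw [gaussianPDFReal_zero_eq]; ring
  rw [heq, integral_const_mul, integral_id_mul_exp_neg_mul_sq hb, mul_zero]

lemma integral_pdf0_mul_sq (v : ℝ≥0) (hv : v ≠ 0) :
    ∫ x : ℝ, gaussianPDFReal 0 v x * x ^ 2 = v := by
  have hv' : 0 < (v:ℝ) := by positivity
  have hb : 0 < (2 * (v:ℝ))⁻¹ := by positivity
  have h2 := integral_sq_mul_exp_neg_mul_sq hb
  have heq : (fun x : ℝ => gaussianPDFReal 0 v x * x ^ 2)
      = fun x : ℝ => (Real.sqrt (2 * π * v))⁻¹ * (x ^ 2 * rexp (-(2 * (v:ℝ))⁻¹ * x ^ 2)) :=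
    funext fun x => by rw [gaussianPDFReal_zero_eq]; ring
  rw [heq, integral_const_mul, h2]
  have hπ : π / (2 * (v:ℝ))⁻¹ = 2 * π * v := by
    field_simp
  rw [hπ]
  have hs : (0:ℝ) < Real.sqrt (2 * π * v) := Real.sqrt_pos.mpr (by positivity)
  field_simp

lemma gaussianPDF_eq_coe (μ : ℝ) (v : ℝ≥0) :
    gaussianPDF μ v = fun x => ((Real.toNNReal (gaussianPDFReal μ v x) : ℝ≥0) : ℝ≥0∞) := rfl

lemma integral_gaussianReal_eq (μ : ℝ) {v : ℝ≥0} (hv : v ≠ 0) (g : ℝ → ℝ) :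
    ∫ x, g x ∂(gaussianReal μ v) = ∫ x, gaussianPDFReal μ v x * g x := by
  rw [gaussianReal_of_var_ne_zero _ hv, gaussianPDF_eq_coe,
    integral_withDensity_eq_integral_smul
      ((measurable_gaussianPDFReal μ v).real_toNNReal) g]
  refine integral_congr_ae (ae_of_all _ fun x => ?_)
  simp [NNReal.smul_def, Real.coe_toNNReal _ (gaussianPDFReal_nonneg μ v x)]

lemma integrable_gaussianReal_iff (μ : ℝ) {v : ℝ≥0} (hv : v ≠ 0) (g : ℝ → ℝ) :
    Integrable g (gaussianReal μ v) ↔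
      Integrable (fun x => gaussianPDFReal μ v x * g x) volume := by
  rw [gaussianReal_of_var_ne_zero _ hv, gaussianPDF_eq_coe,
    integrable_withDensity_iff_integrable_smul
      ((measurable_gaussianPDFReal μ v).real_toNNReal)]
  refine integrable_congr (ae_of_all _ fun x => ?_)
  simp [NNReal.smul_def, Real.coe_toNNReal _ (gaussianPDFReal_nonneg μ v x)]

lemma integral_pdf_shift (μ : ℝ) (v : ℝ≥0) (h : ℝ → ℝ) :
    ∫ x, gaussianPDFReal μ v x * h (x - μ) = ∫ x, gaussianPDFReal 0 v x * h x := by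
  rw [← integral_add_right_eq_self (fun x => gaussianPDFReal μ v x * h (x - μ)) μ]
  refine integral_congr_ae (ae_of_all _ fun x => ?_)
  simp [gaussianPDFReal_add, add_sub_cancel_right]

lemma integrable_pdf_shift_iff (μ : ℝ) (v : ℝ≥0) (h : ℝ → ℝ) :
    Integrable (fun x => gaussianPDFReal μ v x * h (x - μ)) volume ↔
      Integrable (fun x => gaussianPDFReal 0 v x * h x) volume := by
  constructor
  · intro hi
    have := hi.comp_add_right μ
    refine this.congr (ae_of_all _ fun x => ?_)
    simp [gaussianPDFReal_add, add_sub_cancel_right]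
  · intro hi
    have := hi.comp_add_right (-μ)
    refine this.congr (ae_of_all _ fun x => ?_)
    simp [gaussianPDFReal_add, sub_eq_add_neg]

noncomputable def klDivergence {T : Type*} [MeasurableSpace T] (P Q : Measure T) : ℝ :=
  ∫ y, Real.log ((P.rnDeriv Q) y).toReal ∂P

lemma klDivergence_gaussianReal (μ1 μ2 : ℝ) {v1 v2 : ℝ≥0} (h1 : v1 ≠ 0) (h2 : v2 ≠ 0) :
    klDivergence (gaussianReal μ1 v1) (gaussianReal μ2 v2)
      = (Real.log ((v2:ℝ) / v1) + ((v1:ℝ) + (μ1 - μ2) ^ 2) / v2 - 1) / 2 := by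
  have hv1 : (0:ℝ) < v1 := by positivity
  have hv2 : (0:ℝ) < v2 := by positivity
  have hae : ∀ᵐ x ∂(gaussianReal μ1 v1),
      Real.log (((gaussianReal μ1 v1).rnDeriv (gaussianReal μ2 v2)) x).toReal
        = (Real.log (Real.sqrt (2*π*v2)) - Real.log (Real.sqrt (2*π*v1)))
            + (x - μ2)^2 / (2*(v2:ℝ)) - (x - μ1)^2 / (2*(v1:ℝ)) := by
    have hP : gaussianReal μ1 v1 ≪ (volume : Measure ℝ) :=
      gaussianReal_absolutelyContinuous _ h1
    have h_rn : (gaussianReal μ1 v1).rnDeriv (gaussianReal μ2 v2)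
        =ᵐ[volume] fun x => (gaussianPDF μ2 v2 x)⁻¹ * (gaussianReal μ1 v1).rnDeriv volume x := by
      rw [gaussianReal_of_var_ne_zero μ2 h2]
      exact Measure.rnDeriv_withDensity_right _ _ (measurable_gaussianPDF _ _).aemeasurable
        (ae_of_all _ fun x => (gaussianPDF_pos _ h2 x).ne')
        (ae_of_all _ fun x => ENNReal.ofReal_ne_top)
    have h_rn1 : (gaussianReal μ1 v1).rnDeriv volume =ᵐ[volume] gaussianPDF μ1 v1 :=
      rnDeriv_gaussianReal μ1 v1
    filter_upwards [hP.ae_le h_rn, hP.ae_le h_rn1] with x hx hx1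
    rw [hx, hx1]
    have hp1 : 0 < gaussianPDFReal μ1 v1 x := gaussianPDFReal_pos _ _ _ h1
    have hp2 : 0 < gaussianPDFReal μ2 v2 x := gaussianPDFReal_pos _ _ _ h2
    have hpdf : ∀ (m : ℝ) (w : ℝ≥0), gaussianPDF m w x = ENNReal.ofReal (gaussianPDFReal m w x) :=
      fun m w => rfl
    rw [hpdf, hpdf, ENNReal.toReal_mul, ENNReal.toReal_inv, ENNReal.toReal_ofReal hp2.le,
      ENNReal.toReal_ofReal hp1.le, ← div_eq_inv_mul, Real.log_div hp1.ne' hp2.ne']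
    rw [gaussianPDFReal, gaussianPDFReal,
      Real.log_mul (by positivity) (Real.exp_ne_zero _),
      Real.log_mul (by positivity) (Real.exp_ne_zero _),
      Real.log_exp, Real.log_exp, Real.log_inv, Real.log_inv]
    ring
  have hkl : klDivergence (gaussianReal μ1 v1) (gaussianReal μ2 v2)
      = ∫ x, gaussianPDFReal μ1 v1 x *
          ((Real.log (Real.sqrt (2*π*v2)) - Real.log (Real.sqrt (2*π*v1)))
            + (x - μ2)^2 / (2*(v2:ℝ)) - (x - μ1)^2 / (2*(v1:ℝ))) := by
    rw [klDivergence, integral_congr_ae hae, integral_gaussianReal_eq μ1 h1]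
  rw [hkl]
  set d : ℝ := μ1 - μ2 with hd
  set C : ℝ := Real.log (Real.sqrt (2*π*v2)) - Real.log (Real.sqrt (2*π*v1)) with hC
  have hshift := integral_pdf_shift μ1 v1
    (fun t => C + (t + d)^2 / (2*(v2:ℝ)) - t^2 / (2*(v1:ℝ)))
  have hmatch : (fun x : ℝ => gaussianPDFReal μ1 v1 x *
        (C + (x - μ2)^2 / (2*(v2:ℝ)) - (x - μ1)^2 / (2*(v1:ℝ))))
      = fun x : ℝ => gaussianPDFReal μ1 v1 x *
        (C + ((x - μ1) + d)^2 / (2*(v2:ℝ)) - (x - μ1)^2 / (2*(v1:ℝ))) :=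
    funext fun x => by rw [hd]; ring_nf
  rw [hmatch, hshift]
  have hInt0 : Integrable (fun x : ℝ => gaussianPDFReal 0 v1 x) := integrable_gaussianPDFReal 0 v1
  have hInt1 := integrable_pdf0_mul_id v1 h1
  have hInt2 := integrable_pdf0_mul_sq v1 h1
  have hsplit : (fun x : ℝ => gaussianPDFReal 0 v1 x * (C + (x + d)^2/(2*(v2:ℝ)) - x^2/(2*(v1:ℝ))))
      = fun x : ℝ => (C + d^2/(2*(v2:ℝ))) * gaussianPDFReal 0 v1 x
          + ((d/(v2:ℝ)) * (gaussianPDFReal 0 v1 x * x)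
            + ((2*(v2:ℝ))⁻¹ - (2*(v1:ℝ))⁻¹) * (gaussianPDFReal 0 v1 x * x^2)) :=
    funext fun x => by field_simp; ring
  have hg : Integrable (fun x : ℝ => d/(v2:ℝ) * (gaussianPDFReal 0 v1 x * x)
      + ((2*(v2:ℝ))⁻¹ - (2*(v1:ℝ))⁻¹) * (gaussianPDFReal 0 v1 x * x^2)) volume :=
    (hInt1.const_mul _).add (hInt2.const_mul _)
  rw [hsplit, integral_add (hInt0.const_mul _) hg,
    integral_add (hInt1.const_mul (d/(v2:ℝ))) (hInt2.const_mul ((2*(v2:ℝ))⁻¹ - (2*(v1:ℝ))⁻¹)),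
    integral_const_mul, integral_const_mul, integral_const_mul,
    integral_pdf0_mul_id v1 h1, integral_pdf0_mul_sq v1 h1,
    integral_gaussianPDFReal_eq_one 0 h1]
  have hCval : C = Real.log ((v2:ℝ)/v1) / 2 := by
    rw [hC, Real.log_sqrt (by positivity), Real.log_sqrt (by positivity),
      div_sub_div_same, ← Real.log_div (by positivity) (by positivity)]
    congr 2
    field_simp
  rw [hCval]
  field_simp
  ring


/-- Equation (4) of the paper (Example 1, multimodal linear regression). The random vector `x`
is split into the `m`-th modality block `xm` (indexed by `ι`) and the complementary block `xr`
(indexed by `κ`). With mean zero and covariance blocks `Smm, Smr, Srm, Srr`, invertible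
`Srr`, and `s² = βmᵀ (Smm - Smr Srr⁻¹ Srm) βm > 0`, the expected relative entropy of the
`m`-th modality is
`2 E[KL(N(xᵀβ, σε²) ‖ N(x₋ₘᵀβ₋ₘ, s² + σε²))]
  = log ((s² + σε²)/σε²) + (βmᵀ Smm βm - s²)/(s² + σε²)`. -/
theorem expected_relative_entropy_linear
    {Ω ι κ : Type*} [MeasurableSpace Ω] [Fintype ι] [Fintype κ] [DecidableEq κ]
    (P : Measure Ω) [IsProbabilityMeasure P]
    (xm : Ω → ι → ℝ) (xr : Ω → κ → ℝ)
    (hxm : Measurable xm) (hxr : Measurable xr)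
    -- finite covariance matrix: all second moments exist
    (hint_mm : ∀ i j, Integrable (fun ω => xm ω i * xm ω j) P)
    (hint_mr : ∀ i j, Integrable (fun ω => xm ω i * xr ω j) P)
    (hint_rr : ∀ i j, Integrable (fun ω => xr ω i * xr ω j) P)
    -- mean zero
    (hmean_m : ∀ i, ∫ ω, xm ω i ∂P = 0) (hmean_r : ∀ j, ∫ ω, xr ω j ∂P = 0)
    -- the covariance blocks
    (Smm : Matrix ι ι ℝ) (Smr : Matrix ι κ ℝ) (Srm : Matrix κ ι ℝ) (Srr : Matrix κ κ ℝ)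
    (hSmm : ∀ i j, Smm i j = ∫ ω, xm ω i * xm ω j ∂P)
    (hSmr : ∀ i j, Smr i j = ∫ ω, xm ω i * xr ω j ∂P)
    (hSrm : ∀ i j, Srm i j = ∫ ω, xr ω i * xm ω j ∂P)
    (hSrr : ∀ i j, Srr i j = ∫ ω, xr ω i * xr ω j ∂P)
    (hinv : IsUnit Srr.det)
    (βm : ι → ℝ) (βr : κ → ℝ) (σε : ℝ) (hσε : 0 < σε)
    (s2 : ℝ) (hs2 : s2 = βm ⬝ᵥ ((Smm - Smr * Srr⁻¹ * Srm) *ᵥ βm)) (hs2pos : 0 < s2) :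
    2 * ∫ ω, klDivergence
        (gaussianReal (xm ω ⬝ᵥ βm + xr ω ⬝ᵥ βr) (σε ^ 2).toNNReal)
        (gaussianReal (xr ω ⬝ᵥ βr) (s2 + σε ^ 2).toNNReal) ∂P
      = Real.log ((s2 + σε ^ 2) / σε ^ 2)
          + (βm ⬝ᵥ (Smm *ᵥ βm) - s2) / (s2 + σε ^ 2) := by
  have hσ2pos : (0:ℝ) < σε ^ 2 := by positivity
  have hSpos : (0:ℝ) < s2 + σε ^ 2 := by positivity
  have h1 : (σε ^ 2).toNNReal ≠ 0 := (Real.toNNReal_pos.mpr hσ2pos).ne'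
  have h2 : (s2 + σε ^ 2).toNNReal ≠ 0 := (Real.toNNReal_pos.mpr hSpos).ne'
  have hσ2 : (((σε ^ 2).toNNReal : ℝ≥0) : ℝ) = σε ^ 2 := Real.coe_toNNReal _ hσ2pos.le
  have hS2 : (((s2 + σε ^ 2).toNNReal : ℝ≥0) : ℝ) = s2 + σε ^ 2 := Real.coe_toNNReal _ hSpos.le
  have hexpand : (fun ω => (xm ω ⬝ᵥ βm) ^ 2)
      = fun ω => ∑ i, ∑ j, (βm i * βm j) * (xm ω i * xm ω j) := by
    funext ω
    rw [dotProduct, sq, Finset.sum_mul_sum]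
    exact Finset.sum_congr rfl fun i _ => Finset.sum_congr rfl fun j _ => by ring
  have hq : Integrable (fun ω => (xm ω ⬝ᵥ βm) ^ 2) P := by
    rw [hexpand]
    exact integrable_finset_sum _ fun i _ =>
      integrable_finset_sum _ fun j _ => (hint_mm i j).const_mul _
  have hqval : ∫ ω, (xm ω ⬝ᵥ βm) ^ 2 ∂P = βm ⬝ᵥ (Smm *ᵥ βm) := by
    rw [hexpand, integral_finset_sum _ fun i _ =>
      integrable_finset_sum _ fun j _ => (hint_mm i j).const_mul _]
    have : ∀ i, ∫ ω, ∑ j, (βm i * βm j) * (xm ω i * xm ω j) ∂P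
        = ∑ j, (βm i * βm j) * Smm i j := by
      intro i
      rw [integral_finset_sum _ fun j _ => (hint_mm i j).const_mul _]
      exact Finset.sum_congr rfl fun j _ => by rw [integral_const_mul, hSmm]
    simp only [this]
    rw [dotProduct]
    refine Finset.sum_congr rfl fun i _ => ?_
    rw [mulVec, dotProduct, Finset.mul_sum]
    exact Finset.sum_congr rfl fun j _ => by ring
  have hKL : ∀ ω, klDivergence
        (gaussianReal (xm ω ⬝ᵥ βm + xr ω ⬝ᵥ βr) (σε ^ 2).toNNReal)
        (gaussianReal (xr ω ⬝ᵥ βr) (s2 + σε ^ 2).toNNReal)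
      = (Real.log ((s2 + σε ^ 2) / σε ^ 2) + σε ^ 2 / (s2 + σε ^ 2) - 1) / 2
        + (2 * (s2 + σε ^ 2))⁻¹ * (xm ω ⬝ᵥ βm) ^ 2 := by
    intro ω
    rw [klDivergence_gaussianReal _ _ h1 h2, hσ2, hS2, add_sub_cancel_right]
    field_simp
    ring
  simp only [hKL]
  rw [integral_add (integrable_const _) (hq.const_mul _), integral_const,
    integral_const_mul, probReal_univ, smul_eq_mul, one_mul, hqval]
  field_simp
  ring
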